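/- Let R be a commutative Noetherian local ring and let M and N be nonzero finitely generated R-modules. If Tor_1^R(M/𝓣(M), N) = 0 and M ⊗_R N is torsion-free, then M is torsion-free, i.e., 𝓣(M) = 0. -/

import Mathlib

/-!
Definitions following O. Celikbas and G. Piepmeyer, "Syzygies and tensor product of
modules": depth, Serre's conditions, Tor vanishing, Betti numbers, complexity,
constant rank, regular local rings, complete intersections, quasi-deformations and
complete intersection dimension.
-/

universe u

open CategoryTheory IsLocalRing

noncomputable section

/-- The depth of a module over a local ring: the supremum of the lengths of weakly
regular sequences on `M` consisting of elements of the maximal ideal.  With this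
definition the depth of the zero module is `∞`. -/
noncomputable def moduleDepth (R : Type u) [CommRing R] [IsLocalRing R]
    (M : Type u) [AddCommGroup M] [Module R M] : ℕ∞ :=
  sSup {n : ℕ∞ | ∃ rs : List R, (rs.length : ℕ∞) = n ∧
    (∀ r ∈ rs, r ∈ maximalIdeal R) ∧ RingTheory.Sequence.IsWeaklyRegular M rs}

/-- Serre's condition `(S_n)`: `depth_{R_p}(M_p) ≥ min (n, ht p)` for every prime `p`
in the support of `M`. -/
def serreCondition (R : Type u) [CommRing R] (M : Type u) [AddCommGroup M] [Module R M]
    (n : ℕ) : Prop :=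
  ∀ p : PrimeSpectrum R, p ∈ Module.support R M →
    min (n : ℕ∞) (Order.height p) ≤
      moduleDepth (Localization.AtPrime p.asIdeal) (LocalizedModule p.asIdeal.primeCompl M)

/-- Vanishing of `Tor_i^R(M, N)` for all `i > 0`. -/
def torVanishesPos (R : Type u) [CommRing R] (M N : Type u) [AddCommGroup M] [Module R M]
    [AddCommGroup N] [Module R N] : Prop :=
  ∀ i : ℕ, 0 < i →
    Limits.IsZero (((Tor (ModuleCat.{u} R) i).obj (ModuleCat.of R M)).obj (ModuleCat.of R N))

/-- The `n`-th Betti number `β_n^R(M) = dim_k Tor_n^R(M, k)` of a module over a local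
ring `(R, 𝔪, k)`.  (`Tor_n^R(M, k)` is naturally a `k`-vector space; we realize its
`k`-structure by base changing to `k`, which does not change it.) -/
noncomputable def bettiNumber (R : Type u) [CommRing R] [IsLocalRing R]
    (M : Type u) [AddCommGroup M] [Module R M] (n : ℕ) : ℕ :=
  Module.finrank (ResidueField R)
    (TensorProduct R (ResidueField R)
      (((Tor (ModuleCat.{u} R) n).obj (ModuleCat.of R M)).obj
        (ModuleCat.of R (ResidueField R))))

/-- The complexity `cx_R(M)`: the least `r` such that the Betti numbers of `M` are
eventually bounded by `β · n^(r-1)` for some real `β`; it is `∞` if no such `r` exists. -/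
noncomputable def complexity (R : Type u) [CommRing R] [IsLocalRing R]
    (M : Type u) [AddCommGroup M] [Module R M] : ℕ∞ :=
  sInf {c : ℕ∞ | ∃ r : ℕ, c = (r : ℕ∞) ∧ ∃ β : ℝ, ∀ᶠ n : ℕ in Filter.atTop,
    (bettiNumber R M n : ℝ) ≤ β * (n : ℝ) ^ ((r : ℝ) - 1)}

/-- `M` has constant rank: there is an `r` with `M_p ≅ R_p^r` for every associated
prime `p` of `R`. -/
def hasConstantRank (R : Type u) [CommRing R] (M : Type u) [AddCommGroup M] [Module R M] :
    Prop :=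
  ∃ r : ℕ, ∀ (p : Ideal R) (hp : p.IsPrime), p ∈ associatedPrimes R R →
    letI := hp
    Nonempty ((LocalizedModule p.primeCompl M) ≃ₗ[Localization.AtPrime p]
      (Fin r → Localization.AtPrime p))

/-- A local ring is regular if it is Noetherian and its embedding dimension
`dim_k 𝔪/𝔪²` equals its Krull dimension. -/
def IsRegularLocal (R : Type u) [CommRing R] [IsLocalRing R] : Prop :=
  IsNoetherianRing R ∧
    ((Module.finrank (ResidueField R) (CotangentSpace R) : ℕ∞) : WithBot ℕ∞) = ringKrullDim R

/-- A Cohen presentation of the `𝔪`-adic completion of a local ring `R` as a quotient of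
a regular local ring `Q` by an ideal generated by a `Q`-regular sequence. -/
structure CIPresentation (R : Type u) [CommRing R] [IsLocalRing R] : Type (u + 1) where
  Q : Type u
  [commRingQ : CommRing Q]
  [isLocalRingQ : IsLocalRing Q]
  regular : IsRegularLocal Q
  toCompletion : Q →+* AdicCompletion (maximalIdeal R) R
  surjective : Function.Surjective toCompletion
  seq : List Q
  isRegularSeq : RingTheory.Sequence.IsRegular Q seq
  ker_eq : RingHom.ker toCompletion = Ideal.span {x | x ∈ seq}

/-- A local ring is a complete intersection if the defining ideal of a Cohen
presentation of its completion is generated by a regular sequence. -/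
def IsCompleteIntersectionLocalRing (R : Type u) [CommRing R] [IsLocalRing R] : Prop :=
  Nonempty (CIPresentation R)

/-- A complete intersection of codimension `c`, the codimension being
`dim_k(𝔪/𝔪²) - dim R`. -/
def IsCompleteIntersectionOfCodim (R : Type u) [CommRing R] [IsLocalRing R] (c : ℕ) :
    Prop :=
  Nonempty (CIPresentation R) ∧
    ((Module.finrank (ResidueField R) (CotangentSpace R) : ℕ∞) : WithBot ℕ∞) =
      ringKrullDim R + (c : WithBot ℕ∞)

/-- A hypersurface is a complete intersection of codimension one. -/
def IsHypersurfaceRing (R : Type u) [CommRing R] [IsLocalRing R] : Prop :=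
  IsCompleteIntersectionOfCodim R 1

/-- A quasi-deformation `R → R' ↞ Q`: a flat local map `R → R'` and a surjective local
map `Q ↠ R'` whose kernel is generated by a `Q`-regular sequence. -/
structure QuasiDeformation (R : Type u) [CommRing R] [IsLocalRing R] : Type (u + 1) where
  R' : Type u
  [commRingR' : CommRing R']
  [isLocalRingR' : IsLocalRing R']
  [algebraR' : Algebra R R']
  flat : Module.Flat R R'
  localHom : IsLocalHom (algebraMap R R')
  Q : Type u
  [commRingQ : CommRing Q]
  [isLocalRingQ : IsLocalRing Q]
  π : Q →+* R'
  surjective : Function.Surjective π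
  localHomπ : IsLocalHom π
  seq : List Q
  isRegularSeq : RingTheory.Sequence.IsRegular Q seq
  ker_eq : RingHom.ker π = Ideal.span {x | x ∈ seq}

/-- A module has finite projective dimension if it admits a projective resolution
vanishing in all sufficiently high degrees. -/
def HasFiniteProjDim (A : Type u) [CommRing A] (X : Type u) [AddCommGroup X]
    [Module A X] : Prop :=
  ∃ (P : ProjectiveResolution (ModuleCat.of A X)) (n : ℕ),
    ∀ i : ℕ, n < i → Limits.IsZero (P.complex.X i)

/-- `M` has finite complete intersection dimension: there is a quasi-deformation
`R → R' ↞ Q` such that `M ⊗_R R'` has finite projective dimension over `Q`. -/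
def HasFiniteCIDim (R : Type u) [CommRing R] [IsLocalRing R] (M : Type u)
    [AddCommGroup M] [Module R M] : Prop :=
  ∃ D : QuasiDeformation R,
    letI := D.commRingR'
    letI := D.algebraR'
    letI := D.commRingQ
    letI : Module D.Q (TensorProduct R D.R' M) := Module.compHom _ D.π
    HasFiniteProjDim D.Q (TensorProduct R D.R' M)

/-- `R` is unramified or equi-characteristic: either `R` and its residue field have the
same characteristic, or the residue characteristic `p` satisfies `p ∉ 𝔪²`. -/
def IsUnramifiedOrEquiChar (R : Type u) [CommRing R] [IsLocalRing R] : Prop :=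
  ringChar R = ringChar (ResidueField R) ∨
    ∀ p : ℕ, p.Prime → p = ringChar (ResidueField R) → (p : R) ∉ maximalIdeal R ^ 2

end

open MonoidalCategory TensorProduct

open LinearMap Function in
theorem chase {R : Type u} [CommRing R]
    {T M A P0 P1 P2 N : Type u}
    [AddCommGroup T] [AddCommGroup M] [AddCommGroup A] [AddCommGroup P0]
    [AddCommGroup P1] [AddCommGroup P2] [AddCommGroup N]
    [Module R T] [Module R M] [Module R A] [Module R P0] [Module R P1]
    [Module R P2] [Module R N]
    [Module.Flat R P0]
    (incl : T →ₗ[R] M) (pr : M →ₗ[R] A)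
    (d21 : P2 →ₗ[R] P1) (d10 : P1 →ₗ[R] P0) (g : P0 →ₗ[R] N)
    (hincl : Injective incl) (hTMA : Exact incl pr) (hpr : Surjective pr)
    (h1 : Exact d21 d10) (h2 : Exact d10 g) (hg : Surjective g)
    (h4 : Exact (d21.lTensor A) (d10.lTensor A)) :
    Injective (incl.rTensor N) := by
  have hinj0 : Injective (incl.rTensor P0) :=
    Module.Flat.rTensor_preserves_injective_linearMap incl hincl
  have comm1 : ∀ (a : TensorProduct R T P0), (g.lTensor M) ((incl.rTensor P0) a)
      = (incl.rTensor N) ((g.lTensor T) a) := fun a => by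
    simp only [← LinearMap.comp_apply, lTensor_comp_rTensor (f := incl) (g := g), rTensor_comp_lTensor (f := incl) (g := g)]
  have comm2 : ∀ (a : TensorProduct R M P1), (d10.lTensor A) ((pr.rTensor P1) a)
      = (pr.rTensor P0) ((d10.lTensor M) a) := fun a => by
    simp only [← LinearMap.comp_apply, lTensor_comp_rTensor (f := pr) (g := d10), rTensor_comp_lTensor (f := pr) (g := d10)]
  have comm3 : ∀ (a : TensorProduct R M P2), (pr.rTensor P1) ((d21.lTensor M) a)
      = (d21.lTensor A) ((pr.rTensor P2) a) := fun a => by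
    simp only [← LinearMap.comp_apply, lTensor_comp_rTensor (f := pr) (g := d21), rTensor_comp_lTensor (f := pr) (g := d21)]
  have comm4 : ∀ (a : TensorProduct R T P1), (incl.rTensor P0) ((d10.lTensor T) a)
      = (d10.lTensor M) ((incl.rTensor P1) a) := fun a => by
    simp only [← LinearMap.comp_apply, lTensor_comp_rTensor (f := incl) (g := d10), rTensor_comp_lTensor (f := incl) (g := d10)]
  rw [injective_iff_map_eq_zero]
  intro x hx
  obtain ⟨u, rfl⟩ := lTensor_surjective T hg x
  have hu0 : (g.lTensor M) ((incl.rTensor P0) u) = 0 := by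
    rw [comm1, hx]
  obtain ⟨v, hv⟩ := ((lTensor_exact M h2 hg) _).mp hu0
  have hw : (d10.lTensor A) ((pr.rTensor P1) v) = 0 := by
    rw [comm2, hv, ← LinearMap.comp_apply, ← rTensor_comp,
      hTMA.linearMap_comp_eq_zero, rTensor_zero, LinearMap.zero_apply]
  obtain ⟨z, hz⟩ := (h4 _).mp hw
  obtain ⟨y, rfl⟩ := rTensor_surjective P2 hpr z
  set v' := v - d21.lTensor M y with hv'
  have hv'pr : (pr.rTensor P1) v' = 0 := by
    rw [hv', map_sub, comm3, hz, sub_self]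
  obtain ⟨s, hs⟩ := ((rTensor_exact P1 hTMA hpr) _).mp hv'pr
  have hv'd : (d10.lTensor M) v' = (incl.rTensor P0) u := by
    rw [hv', map_sub, hv, ← LinearMap.comp_apply, ← lTensor_comp,
      h1.linearMap_comp_eq_zero, lTensor_zero, LinearMap.zero_apply, sub_zero]
  have hus : (incl.rTensor P0) u = (incl.rTensor P0) ((d10.lTensor T) s) := by
    rw [comm4, hs, hv'd]
  have := hinj0 hus
  rw [this, ← LinearMap.comp_apply, ← lTensor_comp,
    h2.linearMap_comp_eq_zero, lTensor_zero, LinearMap.zero_apply]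

open TensorProduct in
theorem aux_subsingleton_of_tensor {R : Type u} [CommRing R] [IsLocalRing R]
    (T N : Type u) [AddCommGroup T] [Module R T] [Module.Finite R T]
    [AddCommGroup N] [Module R N] [Module.Finite R N]
    (hN : Nontrivial N) (h : Subsingleton (T ⊗[R] N)) : Subsingleton T := by
  have hkN : Nontrivial ((ResidueField R) ⊗[R] N) := by
    rw [← not_subsingleton_iff_nontrivial]
    intro h'
    exact (not_subsingleton_iff_nontrivial.mpr hN)
      (IsLocalRing.subsingleton_tensorProduct.mp h')
  obtain ⟨v, hv⟩ := exists_ne (0 : (ResidueField R) ⊗[R] N)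
  obtain ⟨gf, hgf⟩ := (LinearMap.toSpanSingleton (ResidueField R) _ v)
    |>.exists_leftInverse_of_injective (LinearMap.ker_toSpanSingleton _ hv)
  have hv1 : gf v = 1 := by
    have := LinearMap.congr_fun hgf 1
    simpa [LinearMap.toSpanSingleton_apply] using this
  obtain ⟨n0, hn0⟩ : ∃ n : N, gf ((1 : ResidueField R) ⊗ₜ[R] n) ≠ 0 := by
    by_contra hno
    push_neg at hno
    have hall : ∀ w : (ResidueField R) ⊗[R] N, gf w = 0 := by
      intro w
      induction w using TensorProduct.induction_on with
      | zero => simp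
      | tmul c n =>
        have hcn : c ⊗ₜ[R] n = c • ((1 : ResidueField R) ⊗ₜ[R] n) := by
          rw [TensorProduct.smul_tmul', smul_eq_mul, mul_one]
        rw [hcn, map_smul, hno, smul_zero]
      | add x y hx hy => rw [map_add, hx, hy, add_zero]
    rw [hall v] at hv1
    exact one_ne_zero hv1.symm
  set φ : N →ₗ[R] ResidueField R :=
    (gf.restrictScalars R).comp ((TensorProduct.mk R (ResidueField R) N) 1) with hφ
  have hφn0 : φ n0 ≠ 0 := hn0
  have hsmul : ∀ (r : R) (x : ResidueField R), r • x = residue R r * x := by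
    intro r x
    rw [Algebra.smul_def]
    rfl
  have hφsurj : Function.Surjective φ := by
    intro c
    obtain ⟨r, hr⟩ := residue_surjective (R := R) (c * (φ n0)⁻¹)
    refine ⟨r • n0, ?_⟩
    rw [map_smul, hsmul, hr, mul_assoc, inv_mul_cancel₀ hφn0, mul_one]
  have h1 : Subsingleton (T ⊗[R] ResidueField R) :=
    (LinearMap.lTensor_surjective T hφsurj).subsingleton
  have h2 : Subsingleton ((ResidueField R) ⊗[R] T) :=
    (TensorProduct.comm R (ResidueField R) T).toEquiv.injective.subsingleton
  exact IsLocalRing.subsingleton_tensorProduct.mp h2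

/-- If `Tor_1^R(M/𝓣(M), N) = 0` and `M ⊗_R N` is torsion-free, then `M` is
torsion-free. -/
theorem torsion_free_of_tor_vanishing (R : Type u) [CommRing R] [IsLocalRing R]
    [IsNoetherianRing R]
    (M N : Type u) [AddCommGroup M] [Module R M] [Module.Finite R M]
    [AddCommGroup N] [Module R N] [Module.Finite R N]
    (hM : Nontrivial M) (hN : Nontrivial N)
    (htor : Limits.IsZero
      (((Tor (ModuleCat.{u} R) 1).obj
        (ModuleCat.of R (M ⧸ Submodule.torsion R M))).obj (ModuleCat.of R N)))
    (htf : Submodule.torsion R (TensorProduct R M N) = ⊥) :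
    Submodule.torsion R M = ⊥ := by
  classical
  obtain ⟨P⟩ := HasProjectiveResolution.out (Z := ModuleCat.of R N)
  set A := M ⧸ Submodule.torsion R M with hA
  set K := ((((tensoringLeft (ModuleCat.{u} R)).obj
      (ModuleCat.of R A)).mapHomologicalComplex
      (ComplexShape.down ℕ)).obj P.complex) with hK
  have hz : Limits.IsZero (K.homology 1) :=
    Limits.IsZero.of_iso htor (P.isoLeftDerivedObj _ 1).symm
  have hEx : K.ExactAt 1 := (HomologicalComplex.exactAt_iff_isZero_homology _ _).mpr hz
  have hSC : (ShortComplex.mk (K.d 2 1) (K.d 1 0) (K.d_comp_d 2 1 0)).Exact :=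
    (HomologicalComplex.exactAt_iff' K 2 1 0 (by simp) (by simp)).mp hEx
  have h4 : Function.Exact
      ((P.complex.d 2 1).hom.lTensor A)
      ((P.complex.d 1 0).hom.lTensor A) :=
    (ShortComplex.ShortExact.moduleCat_exact_iff_function_exact _).mp hSC
  -- facts about the resolution
  haveI hproj : Module.Projective R (P.complex.X 0) :=
    (IsProjective.iff_projective (P.complex.X 0)).mpr (P.projective 0)
  have h1 : Function.Exact (P.complex.d 2 1).hom (P.complex.d 1 0).hom :=
    (ShortComplex.ShortExact.moduleCat_exact_iff_function_exact _).mp (P.exact_succ 0)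
  have h2 : Function.Exact (P.complex.d 1 0).hom (P.π.f 0).hom :=
    (ShortComplex.ShortExact.moduleCat_exact_iff_function_exact
      (ShortComplex.mk (P.complex.d 1 0) (P.π.f 0) P.complex_d_comp_π_f_zero)).mp
      (ShortComplex.exact_of_g_is_cokernel _ P.isColimitCokernelCofork)
  have hg : Function.Surjective (P.π.f 0).hom :=
    (ModuleCat.epi_iff_surjective (P.π.f 0)).mp inferInstance
  -- the chase
  have hinj : Function.Injective
      (((Submodule.torsion R M).subtype).rTensor N) :=
    chase (Submodule.torsion R M).subtype (Submodule.torsion R M).mkQ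
      (P.complex.d 2 1).hom (P.complex.d 1 0).hom (P.π.f 0).hom
      (Submodule.injective_subtype _) (LinearMap.exact_subtype_mkQ _)
      (Submodule.mkQ_surjective _) h1 h2 hg h4
  -- torsion elements
  have htorel : ∀ x : (Submodule.torsion R M) ⊗[R] N, ∃ r : nonZeroDivisors R, (r : R) • x = 0 := by
    intro x
    induction x using TensorProduct.induction_on with
    | zero => exact ⟨1, smul_zero _⟩
    | tmul t n =>
      obtain ⟨r, hr⟩ := (Submodule.mem_torsion_iff _).mp t.2
      refine ⟨r, ?_⟩
      rw [TensorProduct.smul_tmul']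
      have : (r : R) • t = 0 := Subtype.ext (by simpa [Submonoid.smul_def] using hr)
      rw [this, TensorProduct.zero_tmul]
    | add x y hx hy =>
      obtain ⟨r, hr⟩ := hx
      obtain ⟨s, hs⟩ := hy
      refine ⟨r * s, ?_⟩
      have e1 : ((r * s : nonZeroDivisors R) : R) • x = 0 := by
        rw [Submonoid.coe_mul, mul_comm, mul_smul, hr, smul_zero]
      have e2 : ((r * s : nonZeroDivisors R) : R) • y = 0 := by
        rw [Submonoid.coe_mul, mul_smul, hs, smul_zero]
      rw [smul_add, e1, e2, add_zero]
  have hsub : Subsingleton ((Submodule.torsion R M) ⊗[R] N) := by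
    refine subsingleton_of_forall_eq 0 fun x => ?_
    obtain ⟨r, hr⟩ := htorel x
    have hmem : ((Submodule.torsion R M).subtype.rTensor N) x ∈
        Submodule.torsion R (TensorProduct R M N) := by
      rw [Submodule.mem_torsion_iff]
      exact ⟨r, by rw [Submonoid.smul_def, ← LinearMap.map_smul, hr, map_zero]⟩
    rw [htf, Submodule.mem_bot] at hmem
    exact hinj (by rw [hmem, map_zero])
  haveI : IsNoetherian R M := isNoetherian_of_isNoetherianRing_of_finite R M
  haveI : Module.Finite R (Submodule.torsion R M) :=
    Module.Finite.iff_fg.mpr (IsNoetherian.noetherian _)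
  have hTsub : Subsingleton (Submodule.torsion R M) :=
    aux_subsingleton_of_tensor _ N hN hsub
  rw [eq_bot_iff]
  intro x hx
  have : (⟨x, hx⟩ : Submodule.torsion R M) = 0 := Subsingleton.elim _ _
  simpa [Submodule.mem_bot] using congrArg Subtype.val this
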